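/- Let R1, R2 be nonempty finite sets and define the correlation distance by d_cor(R1,R2)^2 = 1 - |R1 ∩ R2| / sqrt(|R1|·|R2|). Then d_cor(R1,R2)^2 ≤ |R1 △ R2| / max(|R1|,|R2|), where △ denotes symmetric difference. -/

import Mathlib

open Finset

lemma symmDiff_card_eq {α : Type*} [DecidableEq α] (s t : Finset α) :
    (symmDiff s t).card + (s ∩ t).card + (s ∩ t).card = s.card + t.card := by
  have hd : Disjoint (s \ t) (t \ s) := disjoint_sdiff_sdiff
  have : (symmDiff s t).card = (s \ t).card + (t \ s).card := by
    rw [symmDiff_def, Finset.sup_eq_union, Finset.card_union_of_disjoint hd]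
  rw [this]
  have h1 := Finset.card_sdiff_add_card_inter s t
  have h2 := Finset.card_sdiff_add_card_inter t s
  rw [Finset.inter_comm t s] at h2
  omega

/-- Lemma (correlation vs Hamming distance, upper part):
for nonempty finite sets, `1 - |R1 ∩ R2|/√(|R1||R2|) ≤ |R1 △ R2| / max |R1| |R2|`. -/
theorem dcor_sq_le_symmDiff_div_max {α : Type*} [DecidableEq α]
    (R1 R2 : Finset α) (h1 : R1.Nonempty) (h2 : R2.Nonempty) :
    1 - (R1 ∩ R2).card / Real.sqrt ((R1.card : ℝ) * R2.card) ≤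
      ((symmDiff R1 R2).card : ℝ) / max (R1.card : ℝ) (R2.card : ℝ) := by
  set a : ℝ := (R1.card : ℝ) with ha_def
  set b : ℝ := (R2.card : ℝ) with hb_def
  set i : ℝ := ((R1 ∩ R2).card : ℝ) with hi_def
  set s : ℝ := ((symmDiff R1 R2).card : ℝ) with hs_def
  have ha : 0 < a := by
    simp only [ha_def]; exact_mod_cast Finset.card_pos.mpr h1
  have hb : 0 < b := by
    simp only [hb_def]; exact_mod_cast Finset.card_pos.mpr h2
  have hi : 0 ≤ i := by positivity
  have hia : i ≤ a := by
    simp only [hi_def, ha_def]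
    exact_mod_cast Finset.card_le_card (Finset.inter_subset_left)
  have hib : i ≤ b := by
    simp only [hi_def, hb_def]
    exact_mod_cast Finset.card_le_card (Finset.inter_subset_right)
  have hs : s + i + i = a + b := by
    simp only [hs_def, hi_def, ha_def, hb_def]
    exact_mod_cast symmDiff_card_eq R1 R2
  set m : ℝ := max a b with hm_def
  have hm : 0 < m := lt_max_of_lt_left ha
  have hsq : Real.sqrt (a * b) ≤ m := by
    rw [show m = Real.sqrt (m * m) by rw [Real.sqrt_mul_self hm.le]]
    exact Real.sqrt_le_sqrt (by
      rcases max_cases a b with ⟨h, h'⟩ | ⟨h, h'⟩ <;> simp only [hm_def, h] <;> nlinarith)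
  have hsqpos : 0 < Real.sqrt (a * b) := Real.sqrt_pos.mpr (by positivity)
  have step1 : i / m ≤ i / Real.sqrt (a * b) :=
    div_le_div_of_nonneg_left hi hsqpos hsq
  have step2 : 1 - i / m ≤ s / m := by
    rw [sub_le_iff_le_add, ← add_div, le_div_iff₀ hm]
    rcases max_cases a b with ⟨h, h'⟩ | ⟨h, h'⟩ <;> simp only [hm_def, h] <;> linarith
  linarith
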